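/- Let $h \geq 2$ be even and $g \geq 1$ with $g(h+2) \equiv 0 \pmod 4$, and set $n = (3h+2)/2$. If the complete $(n-h)$-partite equipartite graph with parts of size $g$ admits a 1-factorization (which it does since $g(n-h)$ is even), then there exists a decomposition of $K_{n(g)}$ minus all edges among the first $h$ parts into edge-disjoint copies of $K_4-e$: pair each of the $(n-h-1)g = hg/2$ one-factors $F_l$ with a distinct pair $\{x_l, y_l\}$ partitioning the vertices of the first $h$ parts, and form the blocks $[f_1, f_2, x_l - y_l]$ for $\{f_1,f_2\} \in F_l$. -/

import Mathlib

open SimpleGraph Finset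

/-- `K₄ - e`: the complete graph on `{0,1,2,3}` minus the edge `{2,3}`.
In the block notation `[a,b,c-d]`, `a = 0`, `b = 1`, `c = 2`, `d = 3`. -/
def K4e : SimpleGraph (Fin 4) where
  Adj x y := x ≠ y ∧ ¬(x = 2 ∧ y = 3) ∧ ¬(x = 3 ∧ y = 2)
  symm := by
    constructor
    intro x y h
    exact ⟨h.1.symm, fun hc => h.2.2 ⟨hc.2, hc.1⟩, fun hc => h.2.1 ⟨hc.2, hc.1⟩⟩
  loopless := ⟨fun x h => h.1 rfl⟩

instance : DecidableRel K4e.Adj :=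
  fun x y => inferInstanceAs (Decidable (x ≠ y ∧ ¬(x = 2 ∧ y = 3) ∧ ¬(x = 3 ∧ y = 2)))

/-- The edge set of the copy of `K₄ - e` with vertices `f 0, f 1, f 2, f 3`. -/
def copyEdges {V : Type*} (f : Fin 4 → V) : Set (Sym2 V) :=
  Sym2.map f '' K4e.edgeSet

/-- `B` is a packing of `H` by edge-disjoint copies of `K₄ - e`. -/
def IsK4ePacking {V : Type*} (H : SimpleGraph V) (B : Finset (Fin 4 → V)) : Prop :=
  (∀ f ∈ B, Function.Injective f) ∧
  (∀ f ∈ B, copyEdges f ⊆ H.edgeSet) ∧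
  (∀ f ∈ B, ∀ g ∈ B, f ≠ g → Disjoint (copyEdges f) (copyEdges g))

/-- The leave of a packing: the edges of `H` covered by no copy. -/
def leave {V : Type*} (H : SimpleGraph V) (B : Finset (Fin 4 → V)) : Set (Sym2 V) :=
  H.edgeSet \ ⋃ f ∈ B, copyEdges f

/-- `B` is a decomposition of `H` into edge-disjoint copies of `K₄ - e`. -/
def IsK4eDecomp {V : Type*} (H : SimpleGraph V) (B : Finset (Fin 4 → V)) : Prop :=
  IsK4ePacking H B ∧ ∀ e ∈ H.edgeSet, ∃ f ∈ B, e ∈ copyEdges f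

/-- The complete `n`-partite equipartite graph `K_{n(g)}`: the parts are
`{i} × Fin g` for `i : Fin n`, and two vertices are adjacent iff they lie in different parts. -/
def Kng (n g : ℕ) : SimpleGraph (Fin n × Fin g) where
  Adj x y := x.1 ≠ y.1
  symm := ⟨fun _ _ h => h.symm⟩
  loopless := ⟨fun _ h => h rfl⟩

instance (n g : ℕ) : DecidableRel (Kng n g).Adj :=
  fun x y => inferInstanceAs (Decidable (x.1 ≠ y.1))

/-- `K_{n(g)}` minus all edges among the first `h` parts. -/
def KngMinusHole (n g h : ℕ) : SimpleGraph (Fin n × Fin g) where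
  Adj x y := x.1 ≠ y.1 ∧ ¬(x.1.val < h ∧ y.1.val < h)
  symm := ⟨fun _ _ hxy => ⟨hxy.1.symm, fun hc => hxy.2 ⟨hc.2, hc.1⟩⟩⟩
  loopless := ⟨fun _ hxy => hxy.1 rfl⟩


lemma K4e_edgeSet_eq : K4e.edgeSet = {s(0,1), s(0,2), s(0,3), s(1,2), s(1,3)} := by
  ext e
  induction e using Sym2.ind with
  | _ x y =>
    simp only [SimpleGraph.mem_edgeSet, Set.mem_insert_iff, Set.mem_singleton_iff]
    fin_cases x <;> fin_cases y <;> simp [K4e, Sym2.eq_iff] <;> decide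

def mkBlk {V : Type*} (a b c d : V) : Fin 4 → V := ![a,b,c,d]

lemma copyEdges_mkBlk {V : Type*} (a b c d : V) :
    copyEdges (mkBlk a b c d) = {s(a,b), s(a,c), s(a,d), s(b,c), s(b,d)} := by
  unfold copyEdges
  rw [K4e_edgeSet_eq]
  simp [Set.image_insert_eq, Sym2.map_pair_eq, mkBlk]

lemma mem_copyEdges_mkBlk {V : Type*} {a b c d : V} {z : Sym2 V} :
    z ∈ copyEdges (mkBlk a b c d) ↔
      z = s(a,b) ∨ z = s(a,c) ∨ z = s(a,d) ∨ z = s(b,c) ∨ z = s(b,d) := by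
  rw [copyEdges_mkBlk]
  simp only [Set.mem_insert_iff, Set.mem_singleton_iff]

lemma mkBlk_injective {V : Type*} {a b c d : V} (hab : a ≠ b) (hac : a ≠ c) (had : a ≠ d)
    (hbc : b ≠ c) (hbd : b ≠ d) (hcd : c ≠ d) : Function.Injective (mkBlk a b c d) := by
  intro i j hij
  fin_cases i <;> fin_cases j <;> simp_all [mkBlk]

lemma disjoint_blocks {V : Type*} (hole : V → Prop)
    (u v x y u' v' x' y' : V)
    (hu : ¬hole u) (hv : ¬hole v) (hx : hole x) (hy : hole y)
    (hu' : ¬hole u') (hv' : ¬hole v') (hx' : hole x') (hy' : hole y')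
    (hne_uv : s(u,v) ≠ s(u',v'))
    (hcross : ∀ w z w' z', (w = u ∨ w = v) → (z = x ∨ z = y) → (w' = u' ∨ w' = v') →
      (z' = x' ∨ z' = y') → s(w,z) ≠ s(w',z')) :
    Disjoint (copyEdges (mkBlk u v x y)) (copyEdges (mkBlk u' v' x' y')) := by
  rw [Set.disjoint_left]
  intro z hz hz'
  obtain (h1|h1|h1|h1|h1) := mem_copyEdges_mkBlk.mp hz <;> subst h1 <;>
    obtain (h2|h2|h2|h2|h2) := mem_copyEdges_mkBlk.mp hz' <;>
    first
      | exact hne_uv h2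
      | (rw [Sym2.eq_iff] at h2; rcases h2 with ⟨h3,h4⟩|⟨h3,h4⟩ <;> subst_vars <;> tauto)
      | exact hcross _ _ _ _ (by tauto) (by tauto) (by tauto) (by tauto) h2

def shiftEmb (g h : ℕ) {k n : ℕ} (hk : h + k = n) : Fin k × Fin g → Fin n × Fin g :=
  fun p => (⟨h + p.1.val, by have := p.1.isLt; omega⟩, p.2)

lemma shiftEmb_injective (g h : ℕ) {k n : ℕ} (hk : h + k = n) :
    Function.Injective (shiftEmb g h hk) := by
  rintro ⟨⟨pv, hpv⟩, p2⟩ ⟨⟨qv, hqv⟩, q2⟩ hpq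
  simp only [shiftEmb, Prod.mk.injEq, Fin.mk.injEq] at hpq ⊢
  exact ⟨by omega, hpq.2⟩

lemma shiftEmb_fst_le (g h : ℕ) {k n : ℕ} (hk : h + k = n) (p : Fin k × Fin g) :
    h ≤ (shiftEmb g h hk p).1.val := Nat.le_add_right _ _

lemma shiftEmb_fst_inj (g h : ℕ) {k n : ℕ} (hk : h + k = n) {p q : Fin k × Fin g}
    (hpq : (shiftEmb g h hk p).1 = (shiftEmb g h hk q).1) : p.1 = q.1 := by
  obtain ⟨⟨pv, hpv⟩, p2⟩ := p
  obtain ⟨⟨qv, hqv⟩, q2⟩ := q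
  simp only [shiftEmb, Fin.mk.injEq] at hpq ⊢
  omega

lemma shiftEmb_fst_congr (g h : ℕ) {k n : ℕ} (hk : h + k = n) {p q : Fin k × Fin g}
    (hpq : p.1 = q.1) : (shiftEmb g h hk p).1 = (shiftEmb g h hk q).1 := by
  obtain ⟨⟨pv, hpv⟩, p2⟩ := p
  obtain ⟨⟨qv, hqv⟩, q2⟩ := q
  simp only [shiftEmb, Fin.mk.injEq] at hpq ⊢
  omega

lemma shiftEmb_surj (g h : ℕ) {k n : ℕ} (hk : h + k = n) (v : Fin n × Fin g)
    (hv : h ≤ v.1.val) : ∃ p, shiftEmb g h hk p = v := by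
  obtain ⟨⟨vv, hvv⟩, v2⟩ := v
  simp only at hv
  refine ⟨(⟨vv - h, by omega⟩, v2), ?_⟩
  simp only [shiftEmb, Prod.mk.injEq, Fin.mk.injEq]
  exact ⟨by omega, trivial⟩

def holeEmb (g : ℕ) {h n : ℕ} (hhn : h ≤ n) : Fin h × Fin g → Fin n × Fin g :=
  fun q => (⟨q.1.val, lt_of_lt_of_le q.1.isLt hhn⟩, q.2)

lemma holeEmb_injective (g : ℕ) {h n : ℕ} (hhn : h ≤ n) :
    Function.Injective (holeEmb g hhn) := by
  rintro ⟨⟨pv, hpv⟩, p2⟩ ⟨⟨qv, hqv⟩, q2⟩ hpq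
  simp only [holeEmb, Prod.mk.injEq, Fin.mk.injEq] at hpq ⊢
  exact hpq

lemma holeEmb_fst_lt (g : ℕ) {h n : ℕ} (hhn : h ≤ n) (q : Fin h × Fin g) :
    (holeEmb g hhn q).1.val < h := q.1.isLt

lemma holeEmb_surj (g : ℕ) {h n : ℕ} (hhn : h ≤ n) (v : Fin n × Fin g)
    (hv : v.1.val < h) : ∃ q, holeEmb g hhn q = v := by
  obtain ⟨⟨vv, hvv⟩, v2⟩ := v
  simp only at hv
  exact ⟨(⟨vv, hv⟩, v2), rfl⟩

theorem stmt14 (g h n : ℕ) (hg : 1 ≤ g) (hh : 2 ≤ h) (heven : h % 2 = 0)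
    (hmod : g * (h + 2) % 4 = 0) (hn : 2 * n = 3 * h + 2)
    (h1f : ∃ F : Finset (SimpleGraph.Subgraph (Kng (n - h) g)),
      F.card = (n - h - 1) * g ∧ (∀ M ∈ F, M.IsPerfectMatching) ∧
      (∀ M ∈ F, ∀ M' ∈ F, M ≠ M' → Disjoint M.edgeSet M'.edgeSet) ∧
      (⋃ M ∈ F, M.edgeSet) = (Kng (n - h) g).edgeSet) :
    ∃ B : Finset (Fin 4 → Fin n × Fin g), IsK4eDecomp (KngMinusHole n g h) B := by

  obtain ⟨F, hFcard, hFpm, hFdisj, hFcover⟩ := h1f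
  have hhn : h ≤ n := by omega
  have hksum : h + (n - h) = n := by omega
  have hkm : (n - h - 1) * g * 2 = h * g := by
    have h2 : 2 * (n - h - 1) = h := by omega
    calc (n - h - 1) * g * 2 = 2 * (n - h - 1) * g := by ring
      _ = h * g := by rw [h2]
  set m := (n - h - 1) * g with hmdef
  -- pairing of the hole vertices
  let P : Fin m × Fin 2 ≃ Fin h × Fin g :=
    finProdFinEquiv.trans ((finCongr hkm).trans finProdFinEquiv.symm)
  let X : Fin m × Fin 2 → Fin n × Fin g := fun li => holeEmb g hhn (P li)
  have hXinj : Function.Injective X := (holeEmb_injective g hhn).comp P.injective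
  have hXhole : ∀ li, (X li).1.val < h := fun li => holeEmb_fst_lt g hhn (P li)
  have hXsurj : ∀ v : Fin n × Fin g, v.1.val < h → ∃ li, X li = v := by
    intro v hv
    obtain ⟨q, hq⟩ := holeEmb_surj g hhn v hv
    exact ⟨P.symm q, by show holeEmb g hhn (P (P.symm q)) = v; rw [Equiv.apply_symm_apply]; exact hq⟩
  have hXne01 : ∀ l : Fin m, X (l, 0) ≠ X (l, 1) := by
    intro l hc
    have h2 : (0 : Fin 2) = 1 := congrArg Prod.snd (hXinj hc)
    exact absurd h2 (by decide)
  -- indexing of the one-factors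
  let MF : Fin m → (Kng (n - h) g).Subgraph :=
    fun l => (F.equivFin.symm ((finCongr hFcard).symm l)).1
  have hMFmem : ∀ l, MF l ∈ F := fun l => (F.equivFin.symm ((finCongr hFcard).symm l)).2
  have hMFinj : Function.Injective MF := by
    intro l l' hll
    have h1 : F.equivFin.symm ((finCongr hFcard).symm l)
        = F.equivFin.symm ((finCongr hFcard).symm l') := Subtype.ext hll
    exact (finCongr hFcard).symm.injective (F.equivFin.symm.injective h1)
  have hMFsurj : ∀ M ∈ F, ∃ l, MF l = M := by
    intro M hM
    refine ⟨finCongr hFcard (F.equivFin ⟨M, hM⟩), ?_⟩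
    show (F.equivFin.symm ((finCongr hFcard).symm (finCongr hFcard (F.equivFin ⟨M, hM⟩)))).1 = M
    rw [Equiv.symm_apply_apply, Equiv.symm_apply_apply]
  have hpm : ∀ l v, ∃! w, (MF l).Adj v w :=
    fun l => SimpleGraph.Subgraph.isPerfectMatching_iff.mp (hFpm _ (hMFmem l))
  have hout : ∀ e : Sym2 (Fin (n - h) × Fin g),
      s((Quot.out e).1, (Quot.out e).2) = e := fun e => Quot.out_eq e
  have hadj : ∀ l e, e ∈ (MF l).edgeSet → (MF l).Adj (Quot.out e).1 (Quot.out e).2 := by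
    intro l e he
    exact SimpleGraph.Subgraph.mem_edgeSet.mp (by rw [hout e]; exact he)
  have hmatch : ∀ l (a b c d : Fin (n - h) × Fin g), (MF l).Adj a b → (MF l).Adj c d →
      (a = c ∨ a = d) → s(a, b) = s(c, d) := by
    intro l a b c d hab hcd hac
    obtain ⟨w, hw, huniq⟩ := hpm l a
    rcases hac with rfl | rfl
    · rw [huniq b hab, huniq d hcd]
    · rw [huniq b hab, huniq c hcd.symm]; exact Sym2.eq_swap
  -- the blocks
  let blk : Fin m → Sym2 (Fin (n - h) × Fin g) → (Fin 4 → Fin n × Fin g) :=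
    fun l e => mkBlk (shiftEmb g h hksum (Quot.out e).1) (shiftEmb g h hksum (Quot.out e).2)
      (X (l, 0)) (X (l, 1))
  let B : Finset (Fin 4 → Fin n × Fin g) :=
    Finset.univ.biUnion (fun l => ((MF l).edgeSet.toFinite.toFinset).image (blk l))
  have hmemB : ∀ f, f ∈ B ↔ ∃ l e, e ∈ (MF l).edgeSet ∧ blk l e = f := by
    intro f
    rw [show B = Finset.univ.biUnion
      (fun l => ((MF l).edgeSet.toFinite.toFinset).image (blk l)) from rfl]
    simp only [Finset.mem_biUnion, Finset.mem_univ, true_and, Finset.mem_image,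
      Set.Finite.mem_toFinset]
  have hblk : ∀ l e, blk l e = mkBlk (shiftEmb g h hksum (Quot.out e).1)
      (shiftEmb g h hksum (Quot.out e).2) (X (l, 0)) (X (l, 1)) := fun l e => rfl
  have hne_out : ∀ l e, e ∈ (MF l).edgeSet → (Quot.out e).1.1 ≠ (Quot.out e).2.1 :=
    fun l e he => (hadj l e he).adj_sub
  -- adjacency facts
  have hcross_adj : ∀ (p : Fin (n - h) × Fin g) li,
      (KngMinusHole n g h).Adj (shiftEmb g h hksum p) (X li) := by
    intro p li
    have h1 := shiftEmb_fst_le g h hksum p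
    have h2 := hXhole li
    refine ⟨fun hc => ?_, fun hc => ?_⟩
    · rw [hc] at h1; omega
    · omega
  have hnh_adj : ∀ p q : Fin (n - h) × Fin g, p.1 ≠ q.1 →
      (KngMinusHole n g h).Adj (shiftEmb g h hksum p) (shiftEmb g h hksum q) := by
    intro p q hpq
    have h1 := shiftEmb_fst_le g h hksum p
    refine ⟨fun hc => hpq (shiftEmb_fst_inj g h hksum hc), fun hc => ?_⟩
    omega
  refine ⟨B, ⟨⟨?_, ?_, ?_⟩, ?_⟩⟩
  · -- injectivity
    intro f hf
    obtain ⟨l, e, he, rfl⟩ := (hmemB _).mp hf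
    rw [hblk]
    have hab := hne_out l e he
    refine mkBlk_injective ?_ ?_ ?_ ?_ ?_ (hXne01 l)
    · exact fun hc => hab (congrArg Prod.fst (shiftEmb_injective g h hksum hc))
    all_goals
      intro hc
      first
        | (have h1 := shiftEmb_fst_le g h hksum (Quot.out e).1
           have h2 := hXhole (l, (0:Fin 2)); rw [hc] at h1; omega)
        | (have h1 := shiftEmb_fst_le g h hksum (Quot.out e).1
           have h2 := hXhole (l, (1:Fin 2)); rw [hc] at h1; omega)
        | (have h1 := shiftEmb_fst_le g h hksum (Quot.out e).2
           have h2 := hXhole (l, (0:Fin 2)); rw [hc] at h1; omega)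
        | (have h1 := shiftEmb_fst_le g h hksum (Quot.out e).2
           have h2 := hXhole (l, (1:Fin 2)); rw [hc] at h1; omega)
  · -- edges lie in the graph
    intro f hf z hz
    obtain ⟨l, e, he, rfl⟩ := (hmemB _).mp hf
    rw [hblk, mem_copyEdges_mkBlk] at hz
    have hab := hne_out l e he
    rcases hz with rfl | rfl | rfl | rfl | rfl
    · exact (SimpleGraph.mem_edgeSet _).mpr (hnh_adj _ _ hab)
    all_goals exact (SimpleGraph.mem_edgeSet _).mpr (hcross_adj _ _)
  · -- pairwise disjoint
    intro f hf f' hf' hne_ff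
    obtain ⟨l, e, he, rfl⟩ := (hmemB _).mp hf
    obtain ⟨l', e', he', rfl⟩ := (hmemB _).mp hf'
    rw [hblk l e, hblk l' e']
    refine disjoint_blocks (fun v : Fin n × Fin g => v.1.val < h) _ _ _ _ _ _ _ _
      ?_ ?_ (hXhole _) (hXhole _) ?_ ?_ (hXhole _) (hXhole _) ?_ ?_
    · have := shiftEmb_fst_le g h hksum (Quot.out e).1; omega
    · have := shiftEmb_fst_le g h hksum (Quot.out e).2; omega
    · have := shiftEmb_fst_le g h hksum (Quot.out e').1; omega
    · have := shiftEmb_fst_le g h hksum (Quot.out e').2; omega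
    · -- the pure edges differ
      intro hq
      have he_eq : e = e' := by
        have h1 : Sym2.map (shiftEmb g h hksum) e = Sym2.map (shiftEmb g h hksum) e' := by
          rw [← hout e, ← hout e', Sym2.map_pair_eq, Sym2.map_pair_eq]; exact hq
        exact Sym2.map.injective (shiftEmb_injective g h hksum) h1
      by_cases hll : l = l'
      · subst hll; exact hne_ff (by rw [he_eq])
      · exact (Set.disjoint_left.mp
          (hFdisj _ (hMFmem l) _ (hMFmem l') (fun hMM => hll (hMFinj hMM))) he)
          (he_eq ▸ he')
    · -- the mixed edges differ
      intro w z w' z' hw hz hw' hz' heq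
      rw [Sym2.eq_iff] at heq
      have hwnh : ¬ w.1.val < h := by
        rcases hw with rfl | rfl
        · have := shiftEmb_fst_le g h hksum (Quot.out e).1; omega
        · have := shiftEmb_fst_le g h hksum (Quot.out e).2; omega
      have hz'h : z'.1.val < h := by
        rcases hz' with rfl | rfl <;> exact hXhole _
      rcases heq with ⟨hww, hzz⟩ | ⟨h1, h2⟩
      · -- matched orientation
        have hll : l = l' := by
          rcases hz with rfl | rfl <;> rcases hz' with rfl | rfl <;>
            exact congrArg Prod.fst (hXinj hzz)
        subst hll
        have hadj1 := hadj l e he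
        have hadj2 := hadj l e' he'
        have he_eq : e = e' := by
          rw [← hout e, ← hout e']
          rcases hw with rfl | rfl <;> rcases hw' with rfl | rfl
          · exact hmatch l _ _ _ _ hadj1 hadj2
              (Or.inl (shiftEmb_injective g h hksum hww))
          · exact hmatch l _ _ _ _ hadj1 hadj2
              (Or.inr (shiftEmb_injective g h hksum hww))
          · exact Sym2.eq_swap.trans (hmatch l _ _ _ _ hadj1.symm hadj2
              (Or.inl (shiftEmb_injective g h hksum hww)))
          · exact Sym2.eq_swap.trans (hmatch l _ _ _ _ hadj1.symm hadj2
              (Or.inr (shiftEmb_injective g h hksum hww)))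
        exact hne_ff (by rw [he_eq])
      · rw [h1] at hwnh; exact hwnh hz'h
  · -- covering
    have key : ∀ p q : Fin n × Fin g, h ≤ p.1.val → q.1.val < h →
        ∃ f ∈ B, s(p, q) ∈ copyEdges f := by
      intro p q hp hq
      obtain ⟨p0, rfl⟩ := shiftEmb_surj g h hksum p hp
      obtain ⟨⟨l, i⟩, rfl⟩ := hXsurj q hq
      obtain ⟨w, hw, -⟩ := hpm l p0
      have he : s(p0, w) ∈ (MF l).edgeSet := SimpleGraph.Subgraph.mem_edgeSet.mpr hw
      refine ⟨blk l s(p0, w), (hmemB _).mpr ⟨l, _, he, rfl⟩, ?_⟩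
      rw [hblk, mem_copyEdges_mkBlk]
      have hsw := hout s(p0, w)
      rw [Sym2.eq_iff] at hsw
      fin_cases i <;> rcases hsw with ⟨h1, h2⟩ | ⟨h1, h2⟩
      · exact Or.inr (Or.inl (by rw [h1]; rfl))
      · exact Or.inr (Or.inr (Or.inr (Or.inl (by rw [h2]; rfl))))
      · exact Or.inr (Or.inr (Or.inl (by rw [h1]; rfl)))
      · exact Or.inr (Or.inr (Or.inr (Or.inr (by rw [h2]; rfl))))
    intro z
    induction z using Sym2.ind with
    | _ p q =>
      intro hz
      rw [SimpleGraph.mem_edgeSet] at hz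
      obtain ⟨hpq, hnb⟩ := hz
      by_cases hp : p.1.val < h
      · by_cases hq : q.1.val < h
        · exact absurd ⟨hp, hq⟩ hnb
        · obtain ⟨f, hf, hzf⟩ := key q p (by omega) hp
          exact ⟨f, hf, by rw [Sym2.eq_swap]; exact hzf⟩
      · by_cases hq : q.1.val < h
        · exact key p q (by omega) hq
        · obtain ⟨p0, rfl⟩ := shiftEmb_surj g h hksum p (by omega)
          obtain ⟨q0, rfl⟩ := shiftEmb_surj g h hksum q (by omega)
          have hpq0 : p0.1 ≠ q0.1 := fun hc => hpq (shiftEmb_fst_congr g h hksum hc)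
          have hmem0 : s(p0, q0) ∈ (Kng (n - h) g).edgeSet :=
            (SimpleGraph.mem_edgeSet _).mpr hpq0
          rw [← hFcover] at hmem0
          simp only [Set.mem_iUnion] at hmem0
          obtain ⟨M, hM, he0⟩ := hmem0
          obtain ⟨l, rfl⟩ := hMFsurj M hM
          refine ⟨blk l s(p0, q0), (hmemB _).mpr ⟨l, _, he0, rfl⟩, ?_⟩
          rw [hblk, mem_copyEdges_mkBlk]
          left
          calc s(shiftEmb g h hksum p0, shiftEmb g h hksum q0)
              = Sym2.map (shiftEmb g h hksum) s(p0, q0) :=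
                (Sym2.map_pair_eq (shiftEmb g h hksum) p0 q0).symm
            _ = Sym2.map (shiftEmb g h hksum)
                  s((Quot.out s(p0, q0)).1, (Quot.out s(p0, q0)).2) := by
                rw [hout]
            _ = s(shiftEmb g h hksum (Quot.out s(p0, q0)).1,
                  shiftEmb g h hksum (Quot.out s(p0, q0)).2) :=
                Sym2.map_pair_eq _ _ _
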